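/- arXiv:0804.4636 — 6 statements merged into one kernel-verified Lean document; each statement's English description precedes it below -/
import Mathlib

section
/- Let n ≥ 2, κ < 0, λ > 0, r > 0, and let v : [0,r] → ℝ be a positive solution on (0,r) of v''(t) + (n-1)(C_κ(t)/S_κ(t)) v'(t) + λ v(t) = 0 with v(0) = 1, v'(0) = 0, where S_κ(t) = sinh(√(-κ) t)/√(-κ) and C_κ = S_κ'. Then for all t ∈ (0,r), n (C_κ(t)/S_κ(t)) v'(t) + λ v(t) < 0. -/
/-- If `f` has derivative `f'` on `[0,r)` and `f' < 0` on `(0,t0)` with `t0 ∈ (0,r)`,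
then `f t0 < f 0`. -/
lemma aux_decr (f f' : ℝ → ℝ) (r t0 : ℝ) (ht0 : t0 ∈ Set.Ioo (0:ℝ) r)
    (hf : ∀ x ∈ Set.Ico (0:ℝ) r, HasDerivAt f (f' x) x)
    (hneg : ∀ x ∈ Set.Ioo (0:ℝ) t0, f' x < 0) : f t0 < f 0 := by
  have hsub : Set.Icc (0:ℝ) t0 ⊆ Set.Ico (0:ℝ) r :=
    fun x hx => ⟨hx.1, lt_of_le_of_lt hx.2 ht0.2⟩
  have hcont : ContinuousOn f (Set.Icc 0 t0) :=
    fun x hx => ((hf x (hsub hx)).continuousAt).continuousWithinAt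
  have hanti : StrictAntiOn f (Set.Icc 0 t0) := by
    apply strictAntiOn_of_deriv_neg (convex_Icc _ _) hcont
    intro x hx
    rw [interior_Icc] at hx
    rw [(hf x (hsub ⟨hx.1.le, hx.2.le⟩)).deriv]
    exact hneg x hx
  exact hanti (Set.left_mem_Icc.mpr ht0.1.le) (Set.right_mem_Icc.mpr ht0.1.le) ht0.1

/-- hyperbolic case (κ < 0) of the key lemma:
if v is a positive solution of v'' + (n-1)(C_κ/S_κ) v' + λ v = 0 on (0,r)
with v(0)=1, v'(0)=0, then n (C_κ/S_κ) v' + λ v < 0 on (0,r). -/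
theorem stmt0 (n : ℕ) (hn : 2 ≤ n) (κ lam r : ℝ) (hκ : κ < 0) (hlam : 0 < lam)
    (hr : 0 < r) (v v' v'' : ℝ → ℝ)
    (Sκ : ℝ → ℝ) (Cκ : ℝ → ℝ)
    (hS : Sκ = fun t => Real.sinh (Real.sqrt (-κ) * t) / Real.sqrt (-κ))
    (hC : Cκ = fun t => Real.cosh (Real.sqrt (-κ) * t))
    (hv : ∀ t ∈ Set.Ico (0:ℝ) r, HasDerivAt v (v' t) t)
    (hv' : ∀ t ∈ Set.Ico (0:ℝ) r, HasDerivAt v' (v'' t) t)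
    (hpos : ∀ t ∈ Set.Ioo (0:ℝ) r, 0 < v t)
    (hode : ∀ t ∈ Set.Ioo (0:ℝ) r,
      v'' t + (n - 1 : ℝ) * (Cκ t / Sκ t) * v' t + lam * v t = 0)
    (hv0 : v 0 = 1) (hv'0 : v' 0 = 0) :
    ∀ t ∈ Set.Ioo (0:ℝ) r, (n : ℝ) * (Cκ t / Sκ t) * v' t + lam * v t < 0 := by
  obtain ⟨k, rfl⟩ : ∃ k, n = k + 2 := ⟨n - 2, by omega⟩
  set a : ℝ := Real.sqrt (-κ) with ha_def
  have ha : 0 < a := Real.sqrt_pos.mpr (by linarith)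
  have ha2 : a ^ 2 = -κ := Real.sq_sqrt (by linarith)
  have hS' : ∀ t, HasDerivAt Sκ (Cκ t) t := by
    intro t
    have h1 : HasDerivAt (fun t : ℝ => a * t) a t := by
      simpa using (hasDerivAt_id t).const_mul a
    have h2 : HasDerivAt (fun t : ℝ => Real.sinh (a * t)) (Real.cosh (a * t) * a) t :=
      (Real.hasDerivAt_sinh (a * t)).comp t h1
    have h3 := h2.div_const a
    rw [hS, hC]
    convert h3 using 1
    rfl
    rfl
    exact (mul_div_cancel_right₀ _ ha.ne').symm
  have hC' : ∀ t, HasDerivAt Cκ (a ^ 2 * Sκ t) t := by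
    intro t
    have h1 : HasDerivAt (fun t : ℝ => a * t) a t := by
      simpa using (hasDerivAt_id t).const_mul a
    have h2 : HasDerivAt (fun t : ℝ => Real.cosh (a * t)) (Real.sinh (a * t) * a) t :=
      (Real.hasDerivAt_cosh (a * t)).comp t h1
    rw [hS, hC]
    convert h2 using 1
    field_simp
  have Spos : ∀ t : ℝ, 0 < t → 0 < Sκ t := by
    intro t ht
    rw [hS]
    exact div_pos (Real.sinh_pos_iff.mpr (mul_pos ha ht)) ha
  have S0 : Sκ 0 = 0 := by rw [hS]; simp
  have Cpos : ∀ t : ℝ, 0 < Cκ t := by intro t; rw [hC]; exact Real.cosh_pos (a*t)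
  -- Step 1: v' < 0 on (0, r)
  have hstep1 : ∀ t ∈ Set.Ioo (0:ℝ) r, v' t < 0 := by
    intro t0 ht0
    have hwlt := aux_decr (fun t => Sκ t ^ (k + 1) * v' t)
        (fun x => (↑(k + 1) * Sκ x ^ k * Cκ x) * v' x + Sκ x ^ (k + 1) * v'' x)
        r t0 ht0
        (fun x hx => ((hS' x).pow (k + 1)).mul (hv' x hx))
        ?_
    · simp only [S0, hv'0, mul_zero, zero_pow (Nat.succ_ne_zero k), zero_mul] at hwlt
      have hSt : 0 < Sκ t0 ^ (k + 1) := pow_pos (Spos t0 ht0.1) _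
      nlinarith
    · intro x hx
      show (↑(k + 1) * Sκ x ^ k * Cκ x) * v' x + Sκ x ^ (k + 1) * v'' x < 0
      have hxr : x ∈ Set.Ioo (0:ℝ) r := ⟨hx.1, hx.2.trans ht0.2⟩
      have hSx : 0 < Sκ x := Spos x hx.1
      have hvx : 0 < v x := hpos x hxr
      have hode' := hode x hxr
      have hv'' : v'' x = -(((k:ℝ) + 2 - 1) * (Cκ x / Sκ x) * v' x) - lam * v x := by
        push_cast at hode' ⊢; linarith
      have key : (↑(k + 1) * Sκ x ^ k * Cκ x) * v' x + Sκ x ^ (k + 1) * v'' x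
          = -(lam * Sκ x ^ (k + 1) * v x) := by
        rw [hv'']
        push_cast
        field_simp
        ring
      rw [key]
      have : 0 < lam * Sκ x ^ (k + 1) * v x :=
        mul_pos (mul_pos hlam (pow_pos hSx _)) hvx
      linarith
  -- Step 2
  intro t0 ht0
  have hF : ∀ x ∈ Set.Ico (0:ℝ) r,
      HasDerivAt (fun t => ((k:ℝ) + 2) * Cκ t * Sκ t ^ (k + 1) * v' t
        + lam * Sκ t ^ (k + 2) * v t)
      (((((k:ℝ) + 2) * (a ^ 2 * Sκ x) * Sκ x ^ (k + 1)
          + ((k:ℝ) + 2) * Cκ x * (↑(k + 1) * Sκ x ^ k * Cκ x)) * v' x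
          + ((k:ℝ) + 2) * Cκ x * Sκ x ^ (k + 1) * v'' x)
        + (lam * (↑(k + 2) * Sκ x ^ (k + 1) * Cκ x) * v x
          + lam * Sκ x ^ (k + 2) * v' x)) x := by
    intro x hx
    exact ((((hC' x).const_mul ((k:ℝ) + 2)).mul ((hS' x).pow (k + 1))).mul (hv' x hx)).add
      ((((hS' x).pow (k + 2)).const_mul lam).mul (hv x hx))
  have hFlt := aux_decr _ _ r t0 ht0 hF ?_
  · -- conclude
    have hSt : 0 < Sκ t0 := Spos t0 ht0.1
    have hF0 : ((k:ℝ) + 2) * Cκ 0 * Sκ 0 ^ (k + 1) * v' 0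
        + lam * Sκ 0 ^ (k + 2) * v 0 = 0 := by
      simp [S0, zero_pow (Nat.succ_ne_zero _)]
    rw [hF0] at hFlt
    have key : Sκ t0 ^ (k + 2) * ((↑(k + 2) : ℝ) * (Cκ t0 / Sκ t0) * v' t0 + lam * v t0)
        = ((k:ℝ) + 2) * Cκ t0 * Sκ t0 ^ (k + 1) * v' t0 + lam * Sκ t0 ^ (k + 2) * v t0 := by
      push_cast
      field_simp
      ring
    by_contra hcon
    push_neg at hcon
    have h2 := mul_nonneg (pow_pos hSt (k + 2)).le hcon
    rw [key] at h2
    linarith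
  · -- derivative negative on (0, t0)
    intro x hx
    have hxr : x ∈ Set.Ioo (0:ℝ) r := ⟨hx.1, hx.2.trans ht0.2⟩
    have hSx : 0 < Sκ x := Spos x hx.1
    have hv'x : v' x < 0 := hstep1 x hxr
    have hode' := hode x hxr
    have hv'' : v'' x = -(((k:ℝ) + 2 - 1) * (Cκ x / Sκ x) * v' x) - lam * v x := by
      push_cast at hode' ⊢; linarith
    have key : ((((k:ℝ) + 2) * (a ^ 2 * Sκ x) * Sκ x ^ (k + 1)
          + ((k:ℝ) + 2) * Cκ x * (↑(k + 1) * Sκ x ^ k * Cκ x)) * v' x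
          + ((k:ℝ) + 2) * Cκ x * Sκ x ^ (k + 1) * v'' x)
        + (lam * (↑(k + 2) * Sκ x ^ (k + 1) * Cκ x) * v x
          + lam * Sκ x ^ (k + 2) * v' x)
        = (lam - ((k:ℝ) + 2) * κ) * Sκ x ^ (k + 2) * v' x := by
      rw [hv'']
      have : a ^ 2 = -κ := ha2
      rw [this]
      push_cast
      field_simp
      ring
    rw [key]
    have hcoef : 0 < lam - ((k:ℝ) + 2) * κ := by nlinarith [Nat.cast_nonneg (α := ℝ) k]
    exact mul_neg_of_pos_of_neg (mul_pos hcoef (pow_pos hSx _)) hv'x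
end

section
/- Let n ≥ 2, λ > 0, r > 0, and let v : [0,r] → ℝ be a positive solution on (0,r) of v''(t) + ((n-1)/t) v'(t) + λ v(t) = 0 with v(0) = 1, v'(0) = 0. Then for all t ∈ (0,r), n v'(t)/t + λ v(t) < 0. -/
/-- Euclidean case (κ = 0) of the key lemma:
if v is a positive solution of v'' + ((n-1)/t) v' + λ v = 0 on (0,r)
with v(0)=1, v'(0)=0, then n v'/t + λ v < 0 on (0,r). -/
theorem stmt1 (n : ℕ) (hn : 2 ≤ n) (lam r : ℝ) (hlam : 0 < lam) (hr : 0 < r)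
    (v v' v'' : ℝ → ℝ)
    (hv : ∀ t ∈ Set.Ico (0:ℝ) r, HasDerivAt v (v' t) t)
    (hv' : ∀ t ∈ Set.Ico (0:ℝ) r, HasDerivAt v' (v'' t) t)
    (hpos : ∀ t ∈ Set.Ioo (0:ℝ) r, 0 < v t)
    (hode : ∀ t ∈ Set.Ioo (0:ℝ) r,
      v'' t + ((n - 1 : ℝ) / t) * v' t + lam * v t = 0)
    (hv0 : v 0 = 1) (hv'0 : v' 0 = 0) :
    ∀ t ∈ Set.Ioo (0:ℝ) r, (n : ℝ) * v' t / t + lam * v t < 0 := by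
  have hn1 : 1 ≤ n := by omega
  set m := n - 1 with hm
  have hmn : m + 1 = n := by omega
  have hm1 : 1 ≤ m := by omega
  have hcastm : (m : ℝ) = (n : ℝ) - 1 := by
    rw [hm]; push_cast [hn1]; ring
  set w : ℝ → ℝ := fun s => s ^ m * v' s with hw
  set g : ℝ → ℝ := fun s => (n : ℝ) * (s ^ m * v' s) + lam * (s ^ n * v s) with hg
  -- derivative of w
  have hwderiv : ∀ x ∈ Set.Ioo (0:ℝ) r, HasDerivAt w (-lam * x ^ m * v x) x := by
    intro x hx
    have hx0 : x ≠ 0 := ne_of_gt hx.1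
    have hxI : x ∈ Set.Ico (0:ℝ) r := ⟨le_of_lt hx.1, hx.2⟩
    have h2 := (hasDerivAt_pow m x).mul (hv' x hxI)
    refine h2.congr_deriv ?_
    have hv''x : v'' x = -(((n:ℝ) - 1) / x) * v' x - lam * v x := by
      have := hode x hx; linarith
    have hpow : x ^ m = x ^ (m - 1) * x := by
      rw [← pow_succ]
      congr 1
      omega
    rw [hv''x, hcastm, hpow]
    field_simp
    ring
  -- continuity of v, v'
  have hvc : ContinuousOn v (Set.Ico 0 r) :=
    fun x hx => ((hv x hx).continuousAt).continuousWithinAt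
  have hv'c : ContinuousOn v' (Set.Ico 0 r) :=
    fun x hx => ((hv' x hx).continuousAt).continuousWithinAt
  have h0mem : (0:ℝ) ∈ Set.Ico (0:ℝ) r := ⟨le_rfl, hr⟩
  -- w is strictly decreasing
  have hwanti : StrictAntiOn w (Set.Ico 0 r) := by
    apply strictAntiOn_of_deriv_neg (convex_Ico 0 r)
      (((continuous_pow m).continuousOn).mul hv'c)
    intro x hx
    rw [interior_Ico] at hx
    change deriv w x < 0
    rw [(hwderiv x hx).deriv]
    have hvp := hpos x hx
    have hxp : (0:ℝ) < x := hx.1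
    have hprod : 0 < lam * x ^ m * v x := by positivity
    linarith
  have hw0 : w 0 = 0 := by
    simp [hw, hv'0]
  -- v' < 0 on (0,r)
  have hv'neg : ∀ x ∈ Set.Ioo (0:ℝ) r, v' x < 0 := by
    intro x hx
    have hwx : w x < 0 := by
      have := hwanti h0mem ⟨hx.1.le, hx.2⟩ hx.1
      rwa [hw0] at this
    simp only [hw] at hwx
    have hpm := pow_pos hx.1 m
    by_contra h
    push_neg at h
    nlinarith [mul_nonneg hpm.le h]
  -- derivative of g
  have hgderiv : ∀ x ∈ Set.Ioo (0:ℝ) r, HasDerivAt g (lam * x ^ n * v' x) x := by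
    intro x hx
    have hxI : x ∈ Set.Ico (0:ℝ) r := ⟨le_of_lt hx.1, hx.2⟩
    have h1 := (hwderiv x hx).const_mul (n : ℝ)
    have h2 := ((hasDerivAt_pow n x).mul (hv x hxI)).const_mul lam
    have h3 := h1.add h2
    refine h3.congr_deriv ?_
    have : x ^ (n - 1) = x ^ m := by rw [hm]
    rw [this]
    ring
  -- g strictly decreasing
  have hganti : StrictAntiOn g (Set.Ico 0 r) := by
    apply strictAntiOn_of_deriv_neg (convex_Ico 0 r)
    · exact (continuousOn_const.mul (((continuous_pow m).continuousOn).mul hv'c)).add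
        (continuousOn_const.mul (((continuous_pow n).continuousOn).mul hvc))
    · intro x hx
      rw [interior_Ico] at hx
      rw [(hgderiv x hx).deriv]
      have hv'x := hv'neg x hx
      have hxp : (0:ℝ) < x := hx.1
      have hp : 0 < lam * x ^ n := by positivity
      exact mul_neg_of_pos_of_neg hp hv'x
  have hg0 : g 0 = 0 := by
    simp [hg, hv'0, zero_pow (by omega : n ≠ 0)]
  intro t ht
  have hgt : g t < 0 := by
    have := hganti h0mem ⟨ht.1.le, ht.2⟩ ht.1
    rwa [hg0] at this
  have ht0 : (0:ℝ) < t := ht.1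
  have htn : (0:ℝ) < t ^ n := pow_pos ht0 n
  have key : ((n : ℝ) * v' t / t + lam * v t) * t ^ n = g t := by
    have hpow : t ^ n = t ^ m * t := by rw [← pow_succ, hmn]
    rw [hg, hpow]
    field_simp
    rw [hpow]
    ring
  rw [← key] at hgt
  by_contra h
  push_neg at h
  nlinarith [mul_nonneg h htn.le]
end

section
/- Let n ≥ 2, λ > 0, and v : [0,r] → ℝ be a positive C² solution on (0,r) of (t^{n-1} v'(t))' + λ t^{n-1} v(t) = 0 with v(0)=1, v'(0)=0. Define μ(t) = exp(-λ t²/(2n)). Then the Wronskian satisfies t^{n-1}(v'(t)μ(t) − v(t)μ'(t)) = −(λ²/n²) ∫₀ᵗ s^{n+1} μ(s) v(s) ds < 0 for all t ∈ (0,r). -/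
/-- Euclidean Wronskian identity. With μ(t) = exp(-λ t²/(2n)),
t^{n-1}(v'μ − vμ') = −(λ²/n²) ∫₀ᵗ s^{n+1} μ(s) v(s) ds < 0 on (0,r). -/
theorem stmt3 (n : ℕ) (hn : 2 ≤ n) (lam r : ℝ) (hlam : 0 < lam) (hr : 0 < r)
    (v v' : ℝ → ℝ)
    (hv : ∀ t ∈ Set.Ico (0:ℝ) r, HasDerivAt v (v' t) t)
    (hvC2 : ContDiffOn ℝ 2 v (Set.Ico 0 r))
    (hode : ∀ t ∈ Set.Ioo (0:ℝ) r,
      HasDerivAt (fun s => s ^ (n - 1) * v' s) (-(lam * t ^ (n - 1) * v t)) t)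
    (hpos : ∀ t ∈ Set.Ioo (0:ℝ) r, 0 < v t)
    (hv0 : v 0 = 1) (hv'0 : v' 0 = 0)
    (μ μ' : ℝ → ℝ)
    (hμ : μ = fun t => Real.exp (-lam * t ^ 2 / (2 * n)))
    (hμ' : ∀ t, HasDerivAt μ (μ' t) t) :
    ∀ t ∈ Set.Ioo (0:ℝ) r,
      t ^ (n - 1) * (v' t * μ t - v t * μ' t)
        = -(lam ^ 2 / (n : ℝ) ^ 2) * ∫ s in (0:ℝ)..t, s ^ (n + 1) * μ s * v s ∧
      t ^ (n - 1) * (v' t * μ t - v t * μ' t) < 0 := by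
  obtain ⟨m, rfl⟩ : ∃ m, n = m + 2 := ⟨n - 2, by omega⟩
  have hsub : m + 2 - 1 = m + 1 := rfl
  have hadd : m + 2 + 1 = m + 3 := rfl
  have hn0 : ((m : ℝ) + 2) ≠ 0 := by positivity
  -- closed form for μ'
  have hm : ∀ s : ℝ, μ' s = -(lam * s / ((m : ℝ) + 2)) * μ s := by
    intro s
    have h1 : HasDerivAt μ
        (Real.exp (-lam * s ^ 2 / (2 * ((m + 2 : ℕ) : ℝ))) *
          ((-lam * ((2 : ℕ) * s ^ (2 - 1))) / (2 * ((m + 2 : ℕ) : ℝ)))) s := by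
      rw [hμ]
      exact (((hasDerivAt_pow 2 s).const_mul (-lam)).div_const _).exp
    have h2 := (hμ' s).unique h1
    rw [h2, hμ]
    push_cast
    field_simp
  have hμc : Continuous μ := by
    rw [hμ]; exact (Continuous.div_const (by continuity) _).rexp
  have hμ'c : Continuous μ' := by
    have : μ' = fun s => -(lam * s / ((m : ℝ) + 2)) * μ s := funext hm
    rw [this]
    exact (Continuous.div_const (by continuity) _).neg.mul hμc
  have hud := uniqueDiffOn_Ico (0 : ℝ) r
  have hvcont : ContinuousOn v (Set.Ico 0 r) := hvC2.continuousOn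
  have hv'cont : ContinuousOn v' (Set.Ico 0 r) := by
    have h1 := hvC2.continuousOn_derivWithin hud (by norm_num)
    exact h1.congr fun x hx =>
      ((hv x hx).hasDerivWithinAt.derivWithin (hud x hx)).symm
  -- the algebraic rewriting of the Wronskian
  have hW : ∀ s : ℝ, s ^ (m + 1) * (v' s * μ s - v s * μ' s)
      = (s ^ (m + 1) * v' s) * μ s + (lam / ((m : ℝ) + 2)) * (v s * (s ^ (m + 2) * μ s)) := by
    intro s
    rw [hm s]
    field_simp
    ring
  intro t ht
  obtain ⟨ht0, htr⟩ := ht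
  have htIcc : Set.Icc (0 : ℝ) t ⊆ Set.Ico 0 r :=
    fun x hx => ⟨hx.1, lt_of_le_of_lt hx.2 htr⟩
  -- continuity of the Wronskian on [0, t]
  have hWcont : ContinuousOn (fun s => s ^ (m + 1) * (v' s * μ s - v s * μ' s))
      (Set.Icc 0 t) := by
    exact (continuous_pow _).continuousOn.mul
      (((hv'cont.mono htIcc).mul hμc.continuousOn).sub
        ((hvcont.mono htIcc).mul hμ'c.continuousOn))
  -- derivative of the Wronskian on (0, t)
  have hWderiv : ∀ s ∈ Set.Ioo (0 : ℝ) t,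
      HasDerivAt (fun u => u ^ (m + 1) * (v' u * μ u - v u * μ' u))
        (-(lam ^ 2 / ((m : ℝ) + 2) ^ 2) * (s ^ (m + 3) * μ s * v s)) s := by
    intro s hs
    have hsr : s ∈ Set.Ioo (0 : ℝ) r := ⟨hs.1, hs.2.trans htr⟩
    have hsir : s ∈ Set.Ico (0 : ℝ) r := ⟨le_of_lt hs.1, hsr.2⟩
    have h1 : HasDerivAt (fun u => (u ^ (m + 1) * v' u) * μ u)
        (-(lam * s ^ (m + 1) * v s) * μ s + (s ^ (m + 1) * v' s) * μ' s) s :=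
      (hode s hsr).mul (hμ' s)
    have h2 : HasDerivAt (fun u => v u * (u ^ (m + 2) * μ u))
        (v' s * (s ^ (m + 2) * μ s) +
          v s * (((m + 2 : ℕ) : ℝ) * s ^ (m + 1) * μ s + s ^ (m + 2) * μ' s)) s :=
      (hv s hsir).mul ((hasDerivAt_pow (m + 2) s).mul (hμ' s))
    have h3 := h1.add (h2.const_mul (lam / ((m : ℝ) + 2)))
    have hfun : (fun u => u ^ (m + 1) * (v' u * μ u - v u * μ' u))
        = fun u => (u ^ (m + 1) * v' u) * μ u
            + (lam / ((m : ℝ) + 2)) * (v u * (u ^ (m + 2) * μ u)) := funext hW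
    rw [hfun]
    convert h3 using 1
    · rfl
    · rfl
    · rfl
    rw [hm s]
    push_cast
    field_simp
    ring
  -- integrability
  have hintf : IntervalIntegrable (fun s => s ^ (m + 3) * μ s * v s)
      MeasureTheory.volume 0 t := by
    apply ContinuousOn.intervalIntegrable
    rw [Set.uIcc_of_le ht0.le]
    exact ((continuous_pow _).continuousOn.mul hμc.continuousOn).mul (hvcont.mono htIcc)
  have hint : IntervalIntegrable
      (fun s => -(lam ^ 2 / ((m : ℝ) + 2) ^ 2) * (s ^ (m + 3) * μ s * v s))
      MeasureTheory.volume 0 t := hintf.const_mul _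
  -- FTC
  have hFTC := intervalIntegral.integral_eq_sub_of_hasDeriv_right_of_le ht0.le hWcont
      (fun s hs => (hWderiv s hs).hasDerivWithinAt) hint
  rw [intervalIntegral.integral_const_mul] at hFTC
  have key : t ^ (m + 1) * (v' t * μ t - v t * μ' t)
      = -(lam ^ 2 / ((m : ℝ) + 2) ^ 2) * ∫ s in (0:ℝ)..t, s ^ (m + 3) * μ s * v s := by
    rw [hFTC]
    simp
  -- positivity of the integral
  have hIpos : 0 < ∫ s in (0:ℝ)..t, s ^ (m + 3) * μ s * v s := by
    refine intervalIntegral.intervalIntegral_pos_of_pos_on hintf (fun x hx => ?_) ht0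
    have hμx : 0 < μ x := by rw [hμ]; exact Real.exp_pos _
    have hvx := hpos x ⟨hx.1, hx.2.trans htr⟩
    exact mul_pos (mul_pos (pow_pos hx.1 _) hμx) hvx
  have hneg : t ^ (m + 1) * (v' t * μ t - v t * μ' t) < 0 := by
    rw [key]
    have hc : (0 : ℝ) < lam ^ 2 / ((m : ℝ) + 2) ^ 2 := by positivity
    exact mul_neg_of_neg_of_pos (by linarith) hIpos
  constructor
  · simp only [hsub, hadd]
    push_cast
    exact key
  · simp only [hsub]
    exact hneg
end

section
/- Let λ > 0, n ≥ 2, κ < 0. With S_κ(t) = sinh(√(-κ)t)/√(-κ) and C_κ(t) = cosh(√(-κ)t), the function μ(t) = C_κ(t)^{λ/(nκ)} satisfies (S_κ^{n-1} μ')'(t) + λ S_κ(t)^{n-1} ( (n-1)/n + 1/(n C_κ(t)²) − (λ/n²) S_κ(t)²/C_κ(t)² ) μ(t) = 0 for t > 0. -/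
/-- Sturm–Liouville form for μ(t) = C_κ(t)^{λ/(nκ)} (κ < 0):
(S_κ^{n-1} μ')' + λ S_κ^{n-1}((n-1)/n + 1/(nC_κ²) − (λ/n²)S_κ²/C_κ²) μ = 0. -/
theorem stmt5 (n : ℕ) (hn : 2 ≤ n) (κ lam : ℝ) (hκ : κ < 0) (hlam : 0 < lam)
    (Sκ Cκ μ : ℝ → ℝ)
    (hS : Sκ = fun t => Real.sinh (Real.sqrt (-κ) * t) / Real.sqrt (-κ))
    (hC : Cκ = fun t => Real.cosh (Real.sqrt (-κ) * t))
    (hμ : μ = fun t => Cκ t ^ (lam / (n * κ))) :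
    ∀ t > (0:ℝ),
      HasDerivAt (fun s => Sκ s ^ (n - 1) * deriv μ s)
        (-(lam * Sκ t ^ (n - 1) *
            ((n - 1 : ℝ) / n + 1 / (n * Cκ t ^ 2)
              - lam / (n : ℝ) ^ 2 * (Sκ t ^ 2 / Cκ t ^ 2)) * μ t)) t := by
  obtain ⟨m, rfl⟩ : ∃ m, n = m + 2 := ⟨n - 2, by omega⟩
  intro t ht
  set a := Real.sqrt (-κ) with ha_def
  have ha : 0 < a := Real.sqrt_pos.2 (by linarith)
  have ha2 : a ^ 2 = -κ := Real.sq_sqrt (by linarith)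
  set p : ℝ := lam / ((m + 2 : ℕ) * κ) with hp_def
  have hcpos : ∀ s : ℝ, (0:ℝ) < Real.cosh (a * s) := fun s => Real.cosh_pos _
  have hlin : ∀ s : ℝ, HasDerivAt (fun u : ℝ => a * u) a s := by
    intro s
    simpa using (hasDerivAt_id s).const_mul a
  have hμ' : ∀ s : ℝ, HasDerivAt μ
      (Real.sinh (a * s) * a * p * Real.cosh (a * s) ^ (p - 1)) s := by
    intro s
    rw [hμ, hC]
    exact ((hlin s).cosh).rpow_const (Or.inl (ne_of_gt (hcpos s)))
  have hSd : HasDerivAt Sκ (Real.cosh (a * t) * a / a) t := by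
    rw [hS]; exact ((hlin t).sinh).div_const a
  have hP : HasDerivAt (fun s => Sκ s ^ (m + 1))
      ((m + 1 : ℕ) * Sκ t ^ m * (Real.cosh (a * t) * a / a)) t := hSd.pow (m + 1)
  have h2 : HasDerivAt (fun s => Real.cosh (a * s) ^ (p - 1))
      (Real.sinh (a * t) * a * (p - 1) * Real.cosh (a * t) ^ (p - 1 - 1)) t :=
    ((hlin t).cosh).rpow_const (Or.inl (ne_of_gt (hcpos t)))
  have h3 : HasDerivAt (fun s => Real.sinh (a * s) * a)
      (Real.cosh (a * t) * a * a) t := ((hlin t).sinh).mul_const a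
  have hg : HasDerivAt (fun s => p * Real.cosh (a * s) ^ (p - 1) * (Real.sinh (a * s) * a))
      ((p * (Real.sinh (a * t) * a * (p - 1) * Real.cosh (a * t) ^ (p - 1 - 1)))
          * (Real.sinh (a * t) * a)
        + (p * Real.cosh (a * t) ^ (p - 1)) * (Real.cosh (a * t) * a * a)) t :=
    (h2.const_mul p).mul h3
  have hF := hP.mul hg
  have goalfun : (fun s => Sκ s ^ (m + 2 - 1) * deriv μ s)
      = (fun s => Sκ s ^ (m + 1) *
          (p * Real.cosh (a * s) ^ (p - 1) * (Real.sinh (a * s) * a))) := by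
    funext s
    rw [(hμ' s).deriv, show m + 2 - 1 = m + 1 from rfl]
    ring
  rw [goalfun]
  refine hF.congr_deriv ?_
  symm
  -- algebra
  rw [hμ, hS, hC]
  simp only
  set s := Real.sinh (a * t) with hs_def
  set c := Real.cosh (a * t) with hc_def
  have hc0 : (0:ℝ) < c := hcpos t
  have e2 : c ^ (p - 1) = c ^ p / c := by
    rw [Real.rpow_sub hc0, Real.rpow_one]
  have e3 : c ^ (p - 1 - 1) = c ^ p / c / c := by
    rw [Real.rpow_sub hc0, Real.rpow_sub hc0, Real.rpow_one]
  rw [e2, e3]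
  have hcs : c ^ 2 = s ^ 2 + 1 := Real.cosh_sq _
  have hκa : κ = -(a ^ 2) := by linarith
  have hNκ : ((m + 2 : ℕ) : ℝ) * κ ≠ 0 := by
    have h1 : (0:ℝ) < ((m + 2 : ℕ) : ℝ) := by positivity
    exact mul_ne_zero (ne_of_gt h1) (ne_of_lt hκ)
  have hP' : p * (((m + 2 : ℕ) : ℝ) * κ) = lam := by
    rw [hp_def, div_mul_cancel₀ _ hNκ]
  have hm1 : ((m + 1 : ℕ) : ℝ) = ((m + 2 : ℕ) : ℝ) - 1 := by push_cast; ring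
  clear_value p
  generalize c ^ p = q
  rw [show m + 2 - 1 = m + 1 from rfl, ← hP', hκa, hm1]
  have hN0 : ((m + 2 : ℕ) : ℝ) ≠ 0 := by positivity
  linear_combination (norm := (field_simp; ring_nf; field_simp [ha.ne']; ring))
    (-(p * q * s * a / c ^ 2) * (s / a) ^ m) * hcs
end

section
/- Let n ≥ 2, κ < 0, λ > 0, r > 0. Suppose v, μ : (0,r) → ℝ are positive C² functions with (S_κ^{n-1} v')' + λ S_κ^{n-1} v = 0 and (S_κ^{n-1} μ')' + λ S_κ^{n-1} ((n-1)/n + 1/(nC_κ²) − (λ/n²) S_κ²/C_κ²) μ = 0, and the Wronskian W = S_κ^{n-1}(v'μ − μ'v) satisfies W(t) → 0 as t → 0⁺. Then W(t) = −∫₀ᵗ λ S_κ(s)^{n-1} (1/n − 1/(nC_κ(s)²) + (λ/n²) S_κ(s)²/C_κ(s)²) μ(s) v(s) ds < 0 for all t ∈ (0,r). -/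
/-- hyperbolic Wronskian comparison. If v, μ > 0 solve their
respective Sturm–Liouville equations and the Wronskian W = S_κ^{n-1}(v'μ − μ'v)
tends to 0 at 0⁺, then W(t) equals minus the stated integral and is negative. -/
theorem stmt6 (n : ℕ) (hn : 2 ≤ n) (κ lam r : ℝ) (hκ : κ < 0) (hlam : 0 < lam)
    (hr : 0 < r) (Sκ Cκ v v' μ μ' W : ℝ → ℝ)
    (hS : Sκ = fun t => Real.sinh (Real.sqrt (-κ) * t) / Real.sqrt (-κ))
    (hC : Cκ = fun t => Real.cosh (Real.sqrt (-κ) * t))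
    (hvC2 : ContDiffOn ℝ 2 v (Set.Ioo 0 r)) (hμC2 : ContDiffOn ℝ 2 μ (Set.Ioo 0 r))
    (hvpos : ∀ t ∈ Set.Ioo (0:ℝ) r, 0 < v t)
    (hμpos : ∀ t ∈ Set.Ioo (0:ℝ) r, 0 < μ t)
    (hdv : ∀ t ∈ Set.Ioo (0:ℝ) r, HasDerivAt v (v' t) t)
    (hdμ : ∀ t ∈ Set.Ioo (0:ℝ) r, HasDerivAt μ (μ' t) t)
    (hodev : ∀ t ∈ Set.Ioo (0:ℝ) r,
      HasDerivAt (fun s => Sκ s ^ (n - 1) * v' s) (-(lam * Sκ t ^ (n - 1) * v t)) t)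
    (hodeμ : ∀ t ∈ Set.Ioo (0:ℝ) r,
      HasDerivAt (fun s => Sκ s ^ (n - 1) * μ' s)
        (-(lam * Sκ t ^ (n - 1) *
            ((n - 1 : ℝ) / n + 1 / (n * Cκ t ^ 2)
              - lam / (n : ℝ) ^ 2 * (Sκ t ^ 2 / Cκ t ^ 2)) * μ t)) t)
    (hW : W = fun t => Sκ t ^ (n - 1) * (v' t * μ t - μ' t * v t))
    (hW0 : Filter.Tendsto W (nhdsWithin 0 (Set.Ioi 0)) (nhds 0)) :
    ∀ t ∈ Set.Ioo (0:ℝ) r,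
      W t = -∫ s in (0:ℝ)..t,
          lam * Sκ s ^ (n - 1) *
            (1 / (n : ℝ) - 1 / (n * Cκ s ^ 2)
              + lam / (n : ℝ) ^ 2 * (Sκ s ^ 2 / Cκ s ^ 2)) * μ s * v s ∧
      W t < 0 := by
  have hnR : (0:ℝ) < n := by exact_mod_cast (by omega : 0 < n)
  have hsq : 0 < Real.sqrt (-κ) := Real.sqrt_pos.mpr (by linarith)
  have hCpos : ∀ s : ℝ, 0 < Cκ s := by intro s; simp only [hC]; exact Real.cosh_pos _
  have hC1 : ∀ s : ℝ, 0 < s → 1 < Cκ s := by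
    intro s hs; simp only [hC]; exact Real.one_lt_cosh.mpr (ne_of_gt (mul_pos hsq hs))
  have hSpos : ∀ s : ℝ, 0 < s → 0 < Sκ s := by
    intro s hs; simp only [hS]
    exact div_pos (Real.sinh_pos_iff.mpr (mul_pos hsq hs)) hsq
  have hScont : Continuous Sκ := by
    rw [hS]; exact (Real.continuous_sinh.comp (continuous_const.mul continuous_id)).div_const _
  have hCcont : Continuous Cκ := by
    rw [hC]; exact Real.continuous_cosh.comp (continuous_const.mul continuous_id)
  set f : ℝ → ℝ := fun s =>
    lam * Sκ s ^ (n - 1) *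
      (1 / (n : ℝ) - 1 / (n * Cκ s ^ 2)
        + lam / (n : ℝ) ^ 2 * (Sκ s ^ 2 / Cκ s ^ 2)) * μ s * v s with hfdef
  have hfpos : ∀ s ∈ Set.Ioo (0:ℝ) r, 0 < f s := by
    intro s hs
    have hC1s := hC1 s hs.1
    have hSs := hSpos s hs.1
    have hg : 0 < 1 / (n : ℝ) - 1 / (n * Cκ s ^ 2)
        + lam / (n : ℝ) ^ 2 * (Sκ s ^ 2 / Cκ s ^ 2) := by
      have h1 : 1 / ((n : ℝ) * Cκ s ^ 2) < 1 / (n : ℝ) := by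
        apply one_div_lt_one_div_of_lt hnR
        have h1c : (1:ℝ) < Cκ s ^ 2 := by nlinarith
        nlinarith
      have h2 : 0 < lam / (n : ℝ) ^ 2 * (Sκ s ^ 2 / Cκ s ^ 2) := by
        have := hCpos s; positivity
      linarith
    have := hμpos s hs; have := hvpos s hs
    have hp : 0 < Sκ s ^ (n - 1) := pow_pos hSs _
    positivity
  have hfcont : ContinuousOn f (Set.Ioo 0 r) := by
    have hgc : ContinuousOn (fun s => 1 / (n : ℝ) - 1 / (n * Cκ s ^ 2)
        + lam / (n : ℝ) ^ 2 * (Sκ s ^ 2 / Cκ s ^ 2)) (Set.Ioo 0 r) := by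
      apply ContinuousOn.add
      · apply ContinuousOn.sub continuousOn_const
        exact continuousOn_const.div
          (continuousOn_const.mul ((hCcont.pow 2).continuousOn))
          (fun s _ => by have := hCpos s; positivity)
      · exact continuousOn_const.mul
          (((hScont.pow 2).continuousOn).div ((hCcont.pow 2).continuousOn)
            (fun s _ => by have := hCpos s; positivity))
    exact (((continuousOn_const.mul ((hScont.pow (n-1)).continuousOn)).mul hgc).mul
      hμC2.continuousOn).mul hvC2.continuousOn
  have hWderiv : ∀ x ∈ Set.Ioo (0:ℝ) r, HasDerivAt W (-(f x)) x := by
    intro x hx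
    have h3 := ((hodev x hx).mul (hdμ x hx)).sub ((hodeμ x hx).mul (hdv x hx))
    have hWe : W = fun s => (Sκ s ^ (n-1) * v' s) * μ s - (Sκ s ^ (n-1) * μ' s) * v s := by
      rw [hW]; funext s; ring
    rw [hWe]
    refine h3.congr_deriv ?_
    have hCx := hCpos x
    have hne : Cκ x ≠ 0 := ne_of_gt hCx
    have hnne : (n : ℝ) ≠ 0 := ne_of_gt hnR
    simp only [hfdef]
    field_simp
    ring
  intro t ht
  -- the approximating sequence
  set a : ℕ → ℝ := fun i => t / (i + 2) with hadef
  have ha_mem : ∀ i, a i ∈ Set.Ioo 0 t := by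
    intro i
    constructor
    · apply div_pos ht.1; positivity
    · rw [div_lt_iff₀ (by positivity)]
      nlinarith [ht.1, (Nat.cast_nonneg i : (0:ℝ) ≤ i)]
  have ha_t0 : Filter.Tendsto a Filter.atTop (nhds 0) := by
    apply Filter.Tendsto.div_atTop tendsto_const_nhds
    exact Filter.tendsto_atTop_add_const_right _ 2 tendsto_natCast_atTop_atTop
  have ha_tendsto : Filter.Tendsto a Filter.atTop (nhdsWithin 0 (Set.Ioi 0)) := by
    apply tendsto_nhdsWithin_of_tendsto_nhds_of_eventually_within _ ha_t0
    exact Filter.Eventually.of_forall fun i => (ha_mem i).1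
  have hsub : ∀ i, Set.Icc (a i) t ⊆ Set.Ioo 0 r := fun i x hx =>
    ⟨lt_of_lt_of_le (ha_mem i).1 hx.1, lt_of_le_of_lt hx.2 ht.2⟩
  have hfi : ∀ i, MeasureTheory.IntegrableOn f (Set.Ioc (a i) t) := fun i =>
    ((hfcont.mono (hsub i)).integrableOn_Icc).mono_set Set.Ioc_subset_Icc_self
  have hFTC : ∀ i, ∫ s in (a i)..t, f s = W (a i) - W t := by
    intro i
    have hle := (ha_mem i).2.le
    have h := intervalIntegral.integral_eq_sub_of_hasDerivAt
      (f := W) (f' := fun s => -(f s))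
      (by rw [Set.uIcc_of_le hle]
          exact fun x hx => hWderiv x (hsub i hx))
      (by apply ContinuousOn.intervalIntegrable
          rw [Set.uIcc_of_le hle]
          exact (hfcont.mono (hsub i)).neg)
    rw [intervalIntegral.integral_neg] at h
    linarith
  have hWa : Filter.Tendsto (fun i => W (a i)) Filter.atTop (nhds 0) :=
    hW0.comp ha_tendsto
  have hnorm : ∀ i, ∫ x in Set.Ioc (a i) t, ‖f x‖ = W (a i) - W t := by
    intro i
    have : ∫ x in Set.Ioc (a i) t, ‖f x‖ = ∫ x in Set.Ioc (a i) t, f x := by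
      apply MeasureTheory.setIntegral_congr_fun measurableSet_Ioc
      intro x hx
      exact Real.norm_of_nonneg (hfpos x ⟨lt_trans (ha_mem i).1 hx.1,
        lt_of_le_of_lt hx.2 ht.2⟩).le
    rw [this, ← intervalIntegral.integral_of_le (ha_mem i).2.le]
    exact hFTC i
  have hbound : ∀ᶠ i in Filter.atTop, ∫ x in Set.Ioc (a i) t, ‖f x‖ ≤ |W t| + 1 := by
    filter_upwards [hWa.eventually (eventually_le_nhds (by norm_num : (0:ℝ) < 1))] with i hi
    rw [hnorm i]
    have := neg_abs_le (W t)
    linarith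
  have hInt : MeasureTheory.IntegrableOn f (Set.Ioc 0 t) :=
    MeasureTheory.integrableOn_Ioc_of_intervalIntegral_norm_bounded_left hfi ha_t0 hbound
  have hII : ∀ c d : ℝ, 0 ≤ c → c ≤ d → d ≤ t → IntervalIntegrable f MeasureTheory.volume c d := by
    intro c d hc hcd hdt
    rw [intervalIntegrable_iff_integrableOn_Ioc_of_le hcd]
    exact hInt.mono_set (Set.Ioc_subset_Ioc hc hdt)
  have hIntIcc : MeasureTheory.IntegrableOn f (Set.Icc 0 t) := by
    rwa [integrableOn_Icc_iff_integrableOn_Ioc]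
  have hprim : Filter.Tendsto (fun i => ∫ s in Set.Ioc 0 (a i), f s) Filter.atTop (nhds 0) := by
    have hc := intervalIntegral.continuousOn_primitive (f := f) (a := (0:ℝ)) (b := t) hIntIcc
    have h0 : ContinuousWithinAt (fun x => ∫ s in Set.Ioc 0 x, f s) (Set.Icc 0 t) 0 :=
      hc 0 ⟨le_refl 0, ht.1.le⟩
    have h0' := h0.tendsto
    simp only [Set.Ioc_self, MeasureTheory.Measure.restrict_empty,
      MeasureTheory.integral_zero_measure] at h0'
    apply h0'.comp
    apply tendsto_nhdsWithin_of_tendsto_nhds_of_eventually_within _ ha_t0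
    exact Filter.Eventually.of_forall fun i => ⟨(ha_mem i).1.le, (ha_mem i).2.le⟩
  have hlim1 : Filter.Tendsto (fun i => ∫ s in (a i)..t, f s) Filter.atTop (nhds (0 - W t)) := by
    simp only [hFTC]
    exact hWa.sub tendsto_const_nhds
  have hlim2 : Filter.Tendsto (fun i => ∫ s in (a i)..t, f s) Filter.atTop
      (nhds (∫ s in (0:ℝ)..t, f s)) := by
    have heq : ∀ i, ∫ s in (a i)..t, f s
        = (∫ s in (0:ℝ)..t, f s) - ∫ s in Set.Ioc 0 (a i), f s := by
      intro i
      have h := intervalIntegral.integral_add_adjacent_intervals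
        (hII 0 (a i) le_rfl (ha_mem i).1.le (ha_mem i).2.le)
        (hII (a i) t (ha_mem i).1.le (ha_mem i).2.le le_rfl)
      rw [← intervalIntegral.integral_of_le (ha_mem i).1.le]
      linarith
    simp only [heq]
    simpa using tendsto_const_nhds.sub hprim
  have hkey : (∫ s in (0:ℝ)..t, f s) = 0 - W t := tendsto_nhds_unique hlim2 hlim1
  have hpos : 0 < ∫ s in (0:ℝ)..t, f s := by
    have hsplit := intervalIntegral.integral_add_adjacent_intervals
      (hII 0 (t/2) le_rfl (by linarith [ht.1]) (by linarith [ht.1]))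
      (hII (t/2) t (by linarith [ht.1]) (by linarith [ht.1]) le_rfl)
    have h1 : 0 ≤ ∫ s in (0:ℝ)..(t/2), f s := by
      rw [intervalIntegral.integral_of_le (by linarith [ht.1])]
      apply MeasureTheory.setIntegral_nonneg measurableSet_Ioc
      intro x hx
      exact (hfpos x ⟨hx.1, by linarith [hx.2, ht.2]⟩).le
    have h2 : 0 < ∫ s in (t/2)..t, f s := by
      apply intervalIntegral.intervalIntegral_pos_of_pos_on
        (hII (t/2) t (by linarith [ht.1]) (by linarith [ht.1]) le_rfl)
      · intro x hx
        exact hfpos x ⟨by linarith [hx.1, ht.1], lt_of_le_of_lt hx.2.le ht.2⟩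
      · linarith [ht.1]
    linarith
  constructor
  · linarith
  · linarith
end

section
/- Let v : (0,r) → ℝ be positive, satisfying v''(t) + (m-2)(C_κ/S_κ)(t) v'(t) + λ v(t) = 0 with λ > 0 and v'(t) ≤ 0, and suppose (m-1)(C_κ/S_κ)(t) v'(t) + λ v(t) < 0 on (0,r). Let a_1,…,a_m, b_1,…,b_m be reals with Σa_i² ≤ 1 and Σb_i² ≤ 1. Then −v''(t) Σa_i² − v'(t)(C_κ/S_κ)(t)(m − Σa_i² − Σb_i²) ≥ λ v(t) for all t ∈ (0,r). -/
/-- The standard comparison function S_κ of constant curvature κ. -/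
noncomputable def Sk (κ t : ℝ) : ℝ :=
  if 0 < κ then Real.sin (Real.sqrt κ * t) / Real.sqrt κ
  else if κ < 0 then Real.sinh (Real.sqrt (-κ) * t) / Real.sqrt (-κ)
  else t

/-- C_κ = S_κ'. -/
noncomputable def Ck (κ t : ℝ) : ℝ :=
  if 0 < κ then Real.cos (Real.sqrt κ * t)
  else if κ < 0 then Real.cosh (Real.sqrt (-κ) * t)
  else 1

/-- the pointwise algebraic inequality in the proof of Theorem 1.1. -/
theorem stmt12 (m : ℕ) (hm : 2 ≤ m) (κ lam r : ℝ) (hlam : 0 < lam) (hr : 0 < r)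
    (v v' v'' : ℝ → ℝ)
    (hpos : ∀ t ∈ Set.Ioo (0:ℝ) r, 0 < v t)
    (hode : ∀ t ∈ Set.Ioo (0:ℝ) r,
      v'' t + (m - 2 : ℝ) * (Ck κ t / Sk κ t) * v' t + lam * v t = 0)
    (hv'le : ∀ t ∈ Set.Ioo (0:ℝ) r, v' t ≤ 0)
    (hkey : ∀ t ∈ Set.Ioo (0:ℝ) r,
      (m - 1 : ℝ) * (Ck κ t / Sk κ t) * v' t + lam * v t < 0)
    (a b : Fin m → ℝ) (ha : ∑ i, a i ^ 2 ≤ 1) (hb : ∑ i, b i ^ 2 ≤ 1) :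
    ∀ t ∈ Set.Ioo (0:ℝ) r,
      lam * v t ≤ -v'' t * ∑ i, a i ^ 2
        - v' t * (Ck κ t / Sk κ t) * ((m : ℝ) - (∑ i, a i ^ 2) - ∑ i, b i ^ 2) := by
  intro t ht
  have hA : (0:ℝ) ≤ ∑ i, a i ^ 2 := Finset.sum_nonneg fun i _ => sq_nonneg _
  have hB : (0:ℝ) ≤ ∑ i, b i ^ 2 := Finset.sum_nonneg fun i _ => sq_nonneg _
  have hode' := hode t ht
  have hkey' := hkey t ht
  have hv := hpos t ht
  have hm' : (2:ℝ) ≤ (m:ℝ) := by exact_mod_cast hm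
  set Q := Ck κ t / Sk κ t with hQ
  have hQv : Q * v' t < 0 := by nlinarith
  have hv'' : v'' t = -((m:ℝ) - 2) * Q * v' t - lam * v t := by linarith
  rw [hv'']
  nlinarith [mul_nonneg (sub_nonneg.2 ha) (neg_nonneg.2 hkey'.le),
    mul_nonneg (sub_nonneg.2 hb) (neg_nonneg.2 hQv.le)]
end
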